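/- Let 0<p<∞, φ∈𝒢_p(𝔻), φ(1)=1, sup_k φ(2^k)=∞, and suppose r := r_φ satisfies p < r < ∞, where r_φ = sup{q : φ∈𝒢_q(𝔻)}. Then the weak-ℓ_r space ℓ_{r,∞}(ℤ^d) embeds continuously into m_{φ,p}(ℤ^d): there is C>0 with ‖λ|m_{φ,p}‖ ≤ C sup_{ν∈ℕ} ν^{1/r} λ*_ν for all λ∈ℓ_{r,∞}. -/

import Mathlib

open ENNReal Filter

noncomputable section

/-- `Q_{0,k} ⊂ Q_{-j,m}` for dyadic cubes `Q_{-j,m} = 2^j([0,1)^d + m)`. -/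
def inCube (d j : ℕ) (m k : Fin d → ℤ) : Prop :=
  ∀ i, 2 ^ j * m i ≤ k i ∧ k i < 2 ^ j * (m i + 1)

/-- the local quantity `(Σ_{k : Q_{0,k} ⊂ Q_{-j,m}} |λ_k|^p)^{1/p}`, in `ℝ≥0∞`. -/
def localSum (d : ℕ) (p : ℝ) (j : ℕ) (m : Fin d → ℤ)
    (lam : (Fin d → ℤ) → ℂ) : ℝ≥0∞ :=
  (∑' k : {k : Fin d → ℤ // inCube d j m k}, ENNReal.ofReal ‖lam k.1‖ ^ p) ^ (1 / p)

/-- quasi-norm of the generalised Morrey sequence space `m_{φ,p}(ℤ^d)`;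
`φ j` stands for `φ(2^j)`. -/
def mNorm (d : ℕ) (p : ℝ) (φ : ℕ → ℝ) (lam : (Fin d → ℤ) → ℂ) : ℝ≥0∞ :=
  ⨆ (j : ℕ) (m : Fin d → ℤ),
    ENNReal.ofReal (φ j) * (2 : ℝ≥0∞) ^ (-((j : ℝ) * d) / p) * localSum d p j m lam

def ellpNorm (d : ℕ) (p : ℝ) (lam : (Fin d → ℤ) → ℂ) : ℝ≥0∞ :=
  (∑' k : Fin d → ℤ, ENNReal.ofReal ‖lam k‖ ^ p) ^ (1 / p)

def linftyNorm (d : ℕ) (lam : (Fin d → ℤ) → ℂ) : ℝ≥0∞ :=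
  ⨆ k : Fin d → ℤ, ENNReal.ofReal ‖lam k‖

/-- the class `𝒢_p(𝔻)`: `φ(2^k)` is positive, nondecreasing and
`2^{-kd/p} φ(2^k)` is nonincreasing. -/
def Gp (d : ℕ) (p : ℝ) (φ : ℕ → ℝ) : Prop :=
  (∀ k, 0 < φ k) ∧
  ∀ j k : ℕ, j ≤ k → φ j ≤ φ k ∧ φ k ≤ φ j * 2 ^ (((k : ℝ) - j) * d / p)

/-- non-increasing rearrangement `λ*_ν = inf{t ≥ 0 : #{m : |λ_m| > t} ≤ ν - 1}`. -/
def rearr (d : ℕ) (lam : (Fin d → ℤ) → ℂ) (ν : ℕ) : ℝ :=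
  sInf {t : ℝ | 0 ≤ t ∧ {m : Fin d → ℤ | t < ‖lam m‖}.Finite ∧
    {m : Fin d → ℤ | t < ‖lam m‖}.ncard ≤ ν - 1}

/-- the weak `ℓ_r` quasi-norm `sup_{ν ≥ 1} ν^{1/r} λ*_ν`. -/
def weakNorm (d : ℕ) (r : ℝ) (lam : (Fin d → ℤ) → ℂ) : ℝ≥0∞ :=
  ⨆ ν : ℕ, ENNReal.ofReal (((ν : ℝ) + 1) ^ (1 / r) * rearr d lam (ν + 1))

section Aux

variable {d : ℕ} {lam : (Fin d → ℤ) → ℂ}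

lemma level_finite (htend : Tendsto lam cofinite (nhds 0)) {t : ℝ} (ht : 0 < t) :
    {k : Fin d → ℤ | t < ‖lam k‖}.Finite := by
  have h := htend (Metric.ball_mem_nhds 0 ht)
  rw [Filter.mem_map, Filter.mem_cofinite] at h
  refine h.subset ?_
  intro k hk
  simp only [Set.mem_compl_iff, Set.mem_preimage, Metric.mem_ball, dist_zero_right, not_lt]
  exact hk.le

lemma rearr_set_nonempty (htend : Tendsto lam cofinite (nhds 0)) (ν : ℕ) :
    {t : ℝ | 0 ≤ t ∧ {m : Fin d → ℤ | t < ‖lam m‖}.Finite ∧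
      {m : Fin d → ℤ | t < ‖lam m‖}.ncard ≤ ν - 1}.Nonempty := by
  classical
  set s := (level_finite htend one_pos).toFinset with hs
  set M : ℝ := 1 + ∑ k ∈ s, ‖lam k‖ with hM
  have hM1 : (1 : ℝ) ≤ M := by
    have : 0 ≤ ∑ k ∈ s, ‖lam k‖ := Finset.sum_nonneg fun _ _ => norm_nonneg _
    simp only [hM]; linarith
  have hempty : {m : Fin d → ℤ | M < ‖lam m‖} = ∅ := by
    ext m
    simp only [Set.mem_setOf_eq, Set.mem_empty_iff_false, iff_false, not_lt]
    by_cases hm : 1 < ‖lam m‖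
    · have hmem : m ∈ s := by
        simp only [hs, Set.Finite.mem_toFinset, Set.mem_setOf_eq]; exact hm
      have := Finset.single_le_sum (f := fun k => ‖lam k‖)
        (fun k _ => norm_nonneg (lam k)) hmem
      simp only [hM]; linarith
    · push_neg at hm; linarith
  refine ⟨M, by linarith, ?_, ?_⟩
  · rw [hempty]; exact Set.finite_empty
  · rw [hempty]; simp

lemma rearr_nonneg (htend : Tendsto lam cofinite (nhds 0)) (ν : ℕ) :
    0 ≤ rearr d lam ν :=
  le_csInf (rearr_set_nonempty htend ν) fun _ ht => ht.1

lemma mu_card (htend : Tendsto lam cofinite (nhds 0)) {r : ℝ} (hr0 : 0 < r)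
    (hW : weakNorm d r lam ≠ ⊤) {t : ℝ} (ht : 0 < t) :
    (({k : Fin d → ℤ | t < ‖lam k‖}).ncard : ℝ) ≤ ((weakNorm d r lam).toReal / t) ^ r := by
  set W := (weakNorm d r lam).toReal with hWdef
  have hW0 : 0 ≤ W := ENNReal.toReal_nonneg
  set ν0 : ℕ := ⌊(W / t) ^ r⌋₊ with hν0
  have hb : ((ν0 : ℝ) + 1) ^ (1 / r) * rearr d lam (ν0 + 1) ≤ W := by
    have h1 : ENNReal.ofReal (((ν0 : ℝ) + 1) ^ (1 / r) * rearr d lam (ν0 + 1))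
        ≤ weakNorm d r lam := le_iSup (fun ν : ℕ =>
          ENNReal.ofReal (((ν : ℝ) + 1) ^ (1 / r) * rearr d lam (ν + 1))) ν0
    rw [← ENNReal.ofReal_toReal hW] at h1
    exact (ENNReal.ofReal_le_ofReal_iff hW0).1 h1
  have hν : (W / t) ^ r < (ν0 : ℝ) + 1 := Nat.lt_floor_add_one _
  have hνpos : (0 : ℝ) < (ν0 : ℝ) + 1 := by positivity
  have h2 : W < t * ((ν0 : ℝ) + 1) ^ (1 / r) := by
    have hdiv : ((W / t) ^ r) ^ (1 / r) = W / t := by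
      rw [← Real.rpow_mul (div_nonneg hW0 ht.le), mul_one_div_cancel hr0.ne',
        Real.rpow_one]
    have hlt : ((W / t) ^ r) ^ (1 / r) < ((ν0 : ℝ) + 1) ^ (1 / r) :=
      Real.rpow_lt_rpow (Real.rpow_nonneg (div_nonneg hW0 ht.le) r) hν
        (by positivity)
    rw [hdiv] at hlt
    rw [div_lt_iff₀ ht] at hlt
    linarith [hlt]
  have h3 : rearr d lam (ν0 + 1) < t := by
    by_contra hcon
    push_neg at hcon
    have hp1 : (0 : ℝ) < ((ν0 : ℝ) + 1) ^ (1 / r) := by positivity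
    nlinarith [mul_le_mul_of_nonneg_left hcon hp1.le]
  obtain ⟨t', ⟨ht'0, ht'fin, ht'card⟩, ht't⟩ :=
    exists_lt_of_csInf_lt (rearr_set_nonempty htend (ν0 + 1)) h3
  have hsub : {k : Fin d → ℤ | t < ‖lam k‖} ⊆ {k : Fin d → ℤ | t' < ‖lam k‖} :=
    fun k hk => lt_trans ht't hk
  have hle : ({k : Fin d → ℤ | t < ‖lam k‖}).ncard ≤ ν0 := by
    have := Set.ncard_le_ncard hsub ht'fin
    simpa using le_trans this ht'card
  calc (({k : Fin d → ℤ | t < ‖lam k‖}).ncard : ℝ) ≤ (ν0 : ℝ) := by exact_mod_cast hle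
    _ ≤ (W / t) ^ r := Nat.floor_le (by positivity)

lemma pointwise_layer {T : ℝ} (hT : 0 < T) (f p : ℝ) (hp : 0 < p) :
    ENNReal.ofReal f ^ p ≤ ENNReal.ofReal (T ^ p) +
      ∑' ℓ : ℕ, (if T * 2 ^ ℓ < f then ENNReal.ofReal ((T * 2 ^ (ℓ + 1)) ^ p) else 0) := by
  classical
  by_cases hf : f ≤ T
  · refine le_add_right ?_
    calc ENNReal.ofReal f ^ p ≤ ENNReal.ofReal T ^ p :=
          ENNReal.rpow_le_rpow (ENNReal.ofReal_le_ofReal hf) hp.le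
      _ = ENNReal.ofReal (T ^ p) := ENNReal.ofReal_rpow_of_pos hT
  · push_neg at hf
    have hex : ∃ n : ℕ, f ≤ T * 2 ^ n := by
      obtain ⟨n, hn⟩ := pow_unbounded_of_one_lt (f / T) (one_lt_two (α := ℝ))
      exact ⟨n, by rw [div_lt_iff₀ hT] at hn; linarith⟩
    set n0 := Nat.find hex with hn0
    have hn0pos : n0 ≠ 0 := by
      intro h
      have := Nat.find_spec hex
      rw [← hn0, h] at this
      simp at this; linarith
    obtain ⟨ℓ, hℓ⟩ : ∃ ℓ, n0 = ℓ + 1 := ⟨n0 - 1, (Nat.succ_pred_eq_of_pos (Nat.pos_of_ne_zero hn0pos)).symm⟩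
    have h1 : T * 2 ^ ℓ < f := by
      have := Nat.find_min hex (m := ℓ) (by omega)
      push_neg at this; exact this
    have h2 : f ≤ T * 2 ^ (ℓ + 1) := by
      have := Nat.find_spec hex
      rwa [← hn0, hℓ] at this
    have hkey : ENNReal.ofReal f ^ p ≤ ENNReal.ofReal ((T * 2 ^ (ℓ + 1)) ^ p) := by
      calc ENNReal.ofReal f ^ p ≤ ENNReal.ofReal (T * 2 ^ (ℓ + 1)) ^ p :=
            ENNReal.rpow_le_rpow (ENNReal.ofReal_le_ofReal h2) hp.le
        _ = ENNReal.ofReal ((T * 2 ^ (ℓ + 1)) ^ p) :=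
            ENNReal.ofReal_rpow_of_pos (by positivity)
    refine le_trans hkey (le_add_left ?_)
    calc ENNReal.ofReal ((T * 2 ^ (ℓ + 1)) ^ p)
        = (if T * 2 ^ ℓ < f then ENNReal.ofReal ((T * 2 ^ (ℓ + 1)) ^ p) else 0) := by
          rw [if_pos h1]
      _ ≤ _ := ENNReal.le_tsum ℓ

lemma cube_card_le (d j : ℕ) (m : Fin d → ℤ) (c : ℝ≥0∞) :
    ∑' _ : {k : Fin d → ℤ // inCube d j m k}, c ≤ 2 ^ (j * d) * c := by
  classical
  set s : Finset (Fin d → ℤ) :=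
    Finset.Icc (fun i => 2 ^ j * m i) (fun i => 2 ^ j * (m i + 1) - 1) with hs
  have hsub : ∀ k, inCube d j m k → k ∈ s := by
    intro k hk
    rw [hs, Finset.mem_Icc]
    constructor <;> (intro i; have := hk i)
    · exact this.1
    · show k i ≤ 2 ^ j * (m i + 1) - 1
      linarith [Int.lt_iff_add_one_le.mp this.2]
  have hcard : s.card = 2 ^ (j * d) := by
    rw [hs, Pi.card_Icc]
    have : ∀ i : Fin d, (Finset.Icc (2 ^ j * m i) (2 ^ j * (m i + 1) - 1)).card = 2 ^ j := by
      intro i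
      rw [Int.card_Icc]
      have h1 : (2 ^ j * (m i + 1) - 1 + 1 - 2 ^ j * m i : ℤ) = ((2 ^ j : ℕ) : ℤ) := by
        push_cast; ring
      rw [h1, Int.toNat_natCast]
    rw [Finset.prod_congr rfl fun i _ => this i, Finset.prod_const,
      Finset.card_univ, Fintype.card_fin, ← pow_mul]
  have hinj : Function.Injective
      (fun k : {k : Fin d → ℤ // inCube d j m k} => (⟨k.1, hsub _ k.2⟩ : {x // x ∈ s})) := by
    intro a b hab
    have h2 := congrArg Subtype.val hab
    exact Subtype.ext h2
  calc ∑' _ : {k : Fin d → ℤ // inCube d j m k}, c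
      ≤ ∑' _ : {x // x ∈ s}, c :=
        tsum_comp_le_tsum_of_injective hinj fun _ => c
    _ = ∑ _ ∈ s, c := Finset.tsum_subtype s fun _ => c
    _ = s.card • c := Finset.sum_const c
    _ = 2 ^ (j * d) * c := by rw [hcard, nsmul_eq_mul]; norm_num

lemma layer_tsum_le (htend : Tendsto lam cofinite (nhds 0)) {t : ℝ} (ht : 0 < t)
    (c : ℝ≥0∞) {S : Type*} (val : S → (Fin d → ℤ)) (hval : Function.Injective val) :
    ∑' k : S, (if t < ‖lam (val k)‖ then c else 0)
      ≤ (({k : Fin d → ℤ | t < ‖lam k‖}).ncard : ℝ≥0∞) * c := by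
  classical
  have hfin := level_finite htend ht
  calc ∑' k : S, (if t < ‖lam (val k)‖ then c else 0)
      ≤ ∑' k : Fin d → ℤ, (if t < ‖lam k‖ then c else 0) :=
        tsum_comp_le_tsum_of_injective hval fun k => if t < ‖lam k‖ then c else 0
    _ = ∑ k ∈ hfin.toFinset, (if t < ‖lam k‖ then c else 0) := by
        refine tsum_eq_sum ?_
        intro k hk
        rw [if_neg]
        simpa [Set.Finite.mem_toFinset] using hk
    _ = ∑ _ ∈ hfin.toFinset, c := by
        refine Finset.sum_congr rfl fun k hk => ?_
        rw [if_pos]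
        simpa [Set.Finite.mem_toFinset] using hk
    _ = hfin.toFinset.card • c := Finset.sum_const c
    _ = (({k : Fin d → ℤ | t < ‖lam k‖}).ncard : ℝ≥0∞) * c := by
        rw [nsmul_eq_mul, Set.ncard_eq_toFinset_card _ hfin]

end Aux

lemma Gp_of_sSup {d : ℕ} {p r : ℝ} {φ : ℕ → ℝ} (hp : 0 < p) (hGp : Gp d p φ)
    (hr : r = sSup {q : ℝ | 0 < q ∧ Gp d q φ}) (hpr : p < r) : Gp d r φ := by
  have hr0 : 0 < r := hp.trans hpr
  have hpmem : p ∈ {q : ℝ | 0 < q ∧ Gp d q φ} := ⟨hp, hGp⟩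
  have hne : Set.Nonempty {q : ℝ | 0 < q ∧ Gp d q φ} := ⟨p, hpmem⟩
  refine ⟨hGp.1, fun j k hjk => ⟨(hGp.2 j k hjk).1, ?_⟩⟩
  have hkj : (0 : ℝ) ≤ (k : ℝ) - j := by
    simp only [sub_nonneg]; exact_mod_cast hjk
  have hc0 : 0 ≤ ((k : ℝ) - j) * d * Real.log 2 :=
    mul_nonneg (mul_nonneg hkj (by positivity)) (Real.log_nonneg one_le_two)
  set A := Real.log (φ k) - Real.log (φ j) with hA
  have hA0 : 0 ≤ A := sub_nonneg.2 ((Real.log_le_log_iff (hGp.1 j) (hGp.1 k)).2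
    (hGp.2 j k hjk).1)
  have hkey : A * r ≤ ((k : ℝ) - j) * d * Real.log 2 := by
    rcases eq_or_lt_of_le hA0 with h0 | h0
    · rw [← h0, zero_mul]; exact hc0
    · have hub : ∀ q ∈ {q : ℝ | 0 < q ∧ Gp d q φ},
          q ≤ ((k : ℝ) - j) * d * Real.log 2 / A := by
        intro q hq
        have h1 : φ k ≤ φ j * 2 ^ (((k : ℝ) - j) * d / q) := (hq.2.2 j k hjk).2
        have h2 : Real.log (φ k) ≤ Real.log (φ j) + ((k : ℝ) - j) * d / q * Real.log 2 := by
          have := (Real.log_le_log_iff (hGp.1 k)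
            (mul_pos (hGp.1 j) (Real.rpow_pos_of_pos two_pos _))).2 h1
          rwa [Real.log_mul (ne_of_gt (hGp.1 j)) (Real.rpow_pos_of_pos two_pos _).ne',
            Real.log_rpow two_pos] at this
        have h3 : A * q ≤ ((k : ℝ) - j) * d * Real.log 2 := by
          have hq0 : 0 < q := hq.1
          have : A ≤ ((k : ℝ) - j) * d / q * Real.log 2 := by
            rw [hA]; linarith
          calc A * q ≤ ((k : ℝ) - j) * d / q * Real.log 2 * q :=
                mul_le_mul_of_nonneg_right this hq0.le
            _ = ((k : ℝ) - j) * d * Real.log 2 := by field_simp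
        rw [le_div_iff₀ h0]
        linarith [h3]
      have hrle : r ≤ ((k : ℝ) - j) * d * Real.log 2 / A := by
        rw [hr]; exact csSup_le hne hub
      calc A * r ≤ A * (((k : ℝ) - j) * d * Real.log 2 / A) :=
            mul_le_mul_of_nonneg_left hrle hA0
        _ = ((k : ℝ) - j) * d * Real.log 2 := by field_simp
  have hfin : Real.log (φ k) ≤ Real.log (φ j * 2 ^ (((k : ℝ) - j) * d / r)) := by
    rw [Real.log_mul (ne_of_gt (hGp.1 j)) (Real.rpow_pos_of_pos two_pos _).ne',
      Real.log_rpow two_pos]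
    have : A ≤ ((k : ℝ) - j) * d * Real.log 2 / r := (le_div_iff₀ hr0).2 hkey
    rw [hA] at this
    have heq : ((k : ℝ) - j) * d / r * Real.log 2 = ((k : ℝ) - j) * d * Real.log 2 / r := by
      ring
    rw [heq]; linarith
  exact (Real.log_le_log_iff (hGp.1 k)
    (mul_pos (hGp.1 j) (Real.rpow_pos_of_pos two_pos _))).1 hfin

lemma key_alg {W r : ℝ} (hW : 0 < W) (hr0 : r ≠ 0) (p a L : ℝ) :
    (W / (W * (2:ℝ) ^ (-a/r) * (2:ℝ) ^ L)) ^ r * (W * (2:ℝ) ^ (-a/r) * (2:ℝ) ^ (L+1)) ^ p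
      = (W ^ p * (2:ℝ) ^ (a*(1-p/r)) * (2:ℝ) ^ p) * (2:ℝ) ^ ((p-r)*L) := by
  have h2 : (0:ℝ) < 2 := two_pos
  rw [mul_assoc, ← Real.rpow_add h2, mul_assoc, ← Real.rpow_add h2]
  have hstep : W / (W * (2:ℝ) ^ (-a/r + L)) = (2:ℝ) ^ (-(-a/r + L)) := by
    rw [Real.rpow_neg h2.le]
    field_simp
  rw [hstep, ← Real.rpow_mul h2.le,
    Real.mul_rpow hW.le (Real.rpow_nonneg h2.le _), ← Real.rpow_mul h2.le]
  rw [mul_comm ((2:ℝ) ^ (-(-a/r + L) * r)), mul_assoc, ← Real.rpow_add h2]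
  rw [mul_assoc (W ^ p), mul_assoc (W ^ p), ← Real.rpow_add h2, ← Real.rpow_add h2]
  congr 1
  field_simp
  ring

lemma key_alg2 {W r : ℝ} (hW : 0 ≤ W) (hr0 : r ≠ 0) (p a : ℝ) :
    (2:ℝ) ^ a * (W * (2:ℝ) ^ (-a/r)) ^ p = W ^ p * (2:ℝ) ^ (a*(1-p/r)) := by
  have h2 : (0:ℝ) < 2 := two_pos
  rw [Real.mul_rpow hW (Real.rpow_nonneg h2.le _), ← Real.rpow_mul h2.le,
    mul_comm ((2:ℝ) ^ a), mul_assoc, ← Real.rpow_add h2]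
  congr 1
  field_simp
  ring

lemma key_alg3 {W p : ℝ} (hW : 0 ≤ W) (hp : p ≠ 0) (c : ℝ) :
    (W ^ p * (2:ℝ) ^ c) ^ (1/p) = W * (2:ℝ) ^ (c * (1/p)) := by
  rw [Real.mul_rpow (Real.rpow_nonneg hW _) (Real.rpow_nonneg two_pos.le _),
    ← Real.rpow_mul hW, ← Real.rpow_mul two_pos.le, mul_one_div_cancel hp, Real.rpow_one]

theorem stmt_8 (d : ℕ) (hd : 0 < d) (p r : ℝ) (hp : 0 < p)
    (φ : ℕ → ℝ) (hGp : Gp d p φ) (hφ1 : φ 0 = 1)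
    (hunb : ∀ C : ℝ, ∃ k, C < φ k)
    (hr : r = sSup {q : ℝ | 0 < q ∧ Gp d q φ}) (hpr : p < r) :
    ∃ C : ℝ≥0∞, C < ⊤ ∧ ∀ lam : (Fin d → ℤ) → ℂ,
      Tendsto lam cofinite (nhds 0) →
      mNorm d p φ lam ≤ C * weakNorm d r lam := by
  classical
  have hr0 : 0 < r := hp.trans hpr
  have hGr : Gp d r φ := Gp_of_sSup hp hGp hr hpr
  set x : ℝ := (2 : ℝ) ^ (p - r) with hxdef
  have hx1 : x < 1 := Real.rpow_lt_one_of_one_lt_of_neg one_lt_two (by linarith)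
  have hx0 : 0 < x := Real.rpow_pos_of_pos two_pos _
  set C0 : ℝ≥0∞ := 1 + ENNReal.ofReal ((2 : ℝ) ^ p) * (1 - ENNReal.ofReal x)⁻¹ with hC0
  have hgeo : (1 - ENNReal.ofReal x)⁻¹ ≠ ⊤ := by
    simp only [Ne, ENNReal.inv_eq_top, tsub_eq_zero_iff_le, not_le]
    exact ENNReal.ofReal_lt_one.2 hx1
  have hC0top : C0 ≠ ⊤ :=
    ENNReal.add_ne_top.2 ⟨ENNReal.one_ne_top, ENNReal.mul_ne_top ENNReal.ofReal_ne_top hgeo⟩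
  have hC1 : (1 : ℝ≥0∞) ≤ C0 := le_self_add
  have hCne : C0 ^ (1/p) ≠ 0 := by
    intro h0
    have h1 : (1 : ℝ≥0∞) ≤ C0 ^ (1/p) := by
      calc (1 : ℝ≥0∞) = 1 ^ (1/p) := (ENNReal.one_rpow _).symm
        _ ≤ C0 ^ (1/p) := ENNReal.rpow_le_rpow hC1 (by positivity)
    rw [h0] at h1
    exact (not_le.2 zero_lt_one) h1
  refine ⟨C0 ^ (1/p), ENNReal.rpow_lt_top_of_nonneg (by positivity) hC0top, ?_⟩
  intro lam htend
  rcases eq_or_ne (weakNorm d r lam) ⊤ with hWt | hWt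
  · rw [hWt, ENNReal.mul_top hCne]; exact le_top
  set W : ℝ := (weakNorm d r lam).toReal with hWdef
  have hWeq : ENNReal.ofReal W = weakNorm d r lam := ENNReal.ofReal_toReal hWt
  rcases eq_or_lt_of_le (ENNReal.toReal_nonneg : 0 ≤ W) with hW0 | hW0
  · -- W = 0 : lam ≡ 0
    have hzero : ∀ k, ‖lam k‖ = 0 := by
      intro k
      have hle : ∀ t : ℝ, 0 < t → ‖lam k‖ ≤ t := by
        intro t ht
        by_contra hcon
        push_neg at hcon
        have hmu := mu_card htend hr0 hWt ht
        have hW0' : W = 0 := by rw [hWdef, ← hW0]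
        rw [← hWdef, hW0', zero_div, Real.zero_rpow hr0.ne'] at hmu
        have hc0 : ({k' : Fin d → ℤ | t < ‖lam k'‖}).ncard ≤ 0 := by exact_mod_cast hmu
        have hemp := (Set.ncard_eq_zero (level_finite htend ht)).1 (Nat.le_zero.1 hc0)
        exact absurd hemp (Set.nonempty_iff_ne_empty.1 ⟨k, hcon⟩)
      have h0 : ‖lam k‖ ≤ 0 :=
        le_of_forall_pos_le_add fun ε hε => by simpa using hle ε hε
      exact le_antisymm h0 (norm_nonneg _)
    refine le_trans (iSup_le fun j => iSup_le fun m => ?_) zero_le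
    have hls : localSum d p j m lam = 0 := by
      rw [localSum]
      have hz : ∀ k : {k : Fin d → ℤ // inCube d j m k},
          ENNReal.ofReal ‖lam k.1‖ ^ p = 0 := by
        intro k
        rw [hzero, ENNReal.ofReal_zero, ENNReal.zero_rpow_of_pos hp]
      rw [tsum_congr hz, tsum_zero, ENNReal.zero_rpow_of_pos (by positivity)]
    rw [hls, mul_zero]
  · -- main case 0 < W
    rw [← hWeq]
    refine iSup_le fun j => iSup_le fun m => ?_
    set a : ℝ := (j : ℝ) * d with ha
    have ha0 : 0 ≤ a := by positivity
    set T : ℝ := W * (2 : ℝ) ^ (-a/r) with hTdef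
    have hTpos : 0 < T := mul_pos hW0 (Real.rpow_pos_of_pos two_pos _)
    have hBpos : 0 < W ^ p * (2:ℝ) ^ (a*(1-p/r)) :=
      mul_pos (Real.rpow_pos_of_pos hW0 _) (Real.rpow_pos_of_pos two_pos _)
    -- layer bound for each ℓ
    have h5 : ∀ ℓ : ℕ,
        (∑' k : {k : Fin d → ℤ // inCube d j m k},
          if T * 2 ^ ℓ < ‖lam k.1‖ then ENNReal.ofReal ((T * 2 ^ (ℓ+1)) ^ p) else 0)
        ≤ ENNReal.ofReal ((W ^ p * (2:ℝ) ^ (a*(1-p/r)) * (2:ℝ) ^ p) * x ^ ℓ) := by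
      intro ℓ
      have htℓ : (0:ℝ) < T * 2 ^ ℓ := mul_pos hTpos (by positivity)
      have hcount := layer_tsum_le htend htℓ (ENNReal.ofReal ((T * 2 ^ (ℓ+1)) ^ p))
        (Subtype.val (p := fun k => inCube d j m k)) Subtype.val_injective
      refine le_trans hcount ?_
      have hmu := mu_card htend hr0 hWt htℓ
      rw [← hWdef] at hmu
      have hcast : ((({k : Fin d → ℤ | T * 2 ^ ℓ < ‖lam k‖}).ncard : ℝ≥0∞))
          ≤ ENNReal.ofReal ((W / (T * 2 ^ ℓ)) ^ r) := by
        rw [← ENNReal.ofReal_natCast]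
        exact ENNReal.ofReal_le_ofReal hmu
      calc (({k : Fin d → ℤ | T * 2 ^ ℓ < ‖lam k‖}).ncard : ℝ≥0∞) *
            ENNReal.ofReal ((T * 2 ^ (ℓ+1)) ^ p)
          ≤ ENNReal.ofReal ((W / (T * 2 ^ ℓ)) ^ r) * ENNReal.ofReal ((T * 2 ^ (ℓ+1)) ^ p) :=
            mul_le_mul_left hcast _
        _ = ENNReal.ofReal ((W / (T * 2 ^ ℓ)) ^ r * (T * 2 ^ (ℓ+1)) ^ p) :=
            (ENNReal.ofReal_mul (by positivity)).symm
        _ = ENNReal.ofReal ((W ^ p * (2:ℝ) ^ (a*(1-p/r)) * (2:ℝ) ^ p) * x ^ ℓ) := by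
            congr 1
            have e1 : (2:ℝ) ^ ℓ = (2:ℝ) ^ (ℓ : ℝ) := (Real.rpow_natCast 2 ℓ).symm
            have e2 : (2:ℝ) ^ (ℓ+1) = (2:ℝ) ^ ((ℓ : ℝ)+1) := by
              rw [← Real.rpow_natCast 2 (ℓ+1)]; push_cast; ring_nf
            have e3 : x ^ ℓ = (2:ℝ) ^ ((p-r) * (ℓ:ℝ)) := by
              rw [hxdef, ← Real.rpow_natCast ((2:ℝ) ^ (p-r)) ℓ, ← Real.rpow_mul two_pos.le]
            rw [e1, e2, e3, hTdef]
            exact key_alg hW0 hr0.ne' p a (ℓ:ℝ)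
    -- sum bound
    have hS : (∑' k : {k : Fin d → ℤ // inCube d j m k}, ENNReal.ofReal ‖lam k.1‖ ^ p)
        ≤ ENNReal.ofReal (W ^ p * (2:ℝ) ^ (a*(1-p/r))) * C0 := by
      have h1 : ∀ k : {k : Fin d → ℤ // inCube d j m k},
          ENNReal.ofReal ‖lam k.1‖ ^ p ≤ ENNReal.ofReal (T ^ p) +
            ∑' ℓ : ℕ, (if T * 2 ^ ℓ < ‖lam k.1‖
              then ENNReal.ofReal ((T * 2 ^ (ℓ+1)) ^ p) else 0) :=
        fun k => pointwise_layer hTpos _ p hp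
      have hfirst : (∑' _ : {k : Fin d → ℤ // inCube d j m k}, ENNReal.ofReal (T ^ p))
          ≤ ENNReal.ofReal (W ^ p * (2:ℝ) ^ (a*(1-p/r))) := by
        refine le_trans (cube_card_le d j m _) (le_of_eq ?_)
        have e4 : ((2:ℝ≥0∞) ^ (j*d) : ℝ≥0∞) = ENNReal.ofReal ((2:ℝ) ^ (a : ℝ)) := by
          rw [← ENNReal.ofReal_ofNat 2, ← ENNReal.ofReal_pow (by norm_num),
            ← Real.rpow_natCast 2 (j*d)]
          congr 1
          rw [ha]; push_cast; ring
        rw [e4, ← ENNReal.ofReal_mul (by positivity)]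
        congr 1
        rw [hTdef]
        exact key_alg2 hW0.le hr0.ne' p a
      have hsecond : (∑' ℓ : ℕ, ENNReal.ofReal ((W ^ p * (2:ℝ) ^ (a*(1-p/r)) * (2:ℝ) ^ p) * x ^ ℓ))
          = ENNReal.ofReal (W ^ p * (2:ℝ) ^ (a*(1-p/r))) *
            (ENNReal.ofReal ((2:ℝ) ^ p) * (1 - ENNReal.ofReal x)⁻¹) := by
        have hterm : ∀ ℓ : ℕ, ENNReal.ofReal ((W ^ p * (2:ℝ) ^ (a*(1-p/r)) * (2:ℝ) ^ p) * x ^ ℓ)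
            = (ENNReal.ofReal (W ^ p * (2:ℝ) ^ (a*(1-p/r))) * ENNReal.ofReal ((2:ℝ) ^ p)) *
              (ENNReal.ofReal x) ^ ℓ := by
          intro ℓ
          rw [ENNReal.ofReal_mul (by positivity), ENNReal.ofReal_mul (by positivity),
            ENNReal.ofReal_pow hx0.le]
        rw [tsum_congr hterm, ENNReal.tsum_mul_left, ENNReal.tsum_geometric, mul_assoc]
      calc (∑' k : {k : Fin d → ℤ // inCube d j m k}, ENNReal.ofReal ‖lam k.1‖ ^ p)
          ≤ ∑' k : {k : Fin d → ℤ // inCube d j m k}, (ENNReal.ofReal (T ^ p) +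
              ∑' ℓ : ℕ, (if T * 2 ^ ℓ < ‖lam k.1‖
                then ENNReal.ofReal ((T * 2 ^ (ℓ+1)) ^ p) else 0)) := ENNReal.tsum_le_tsum h1
        _ = (∑' _ : {k : Fin d → ℤ // inCube d j m k}, ENNReal.ofReal (T ^ p)) +
            ∑' k : {k : Fin d → ℤ // inCube d j m k}, ∑' ℓ : ℕ,
              (if T * 2 ^ ℓ < ‖lam k.1‖ then ENNReal.ofReal ((T * 2 ^ (ℓ+1)) ^ p) else 0) :=
            ENNReal.tsum_add
        _ = (∑' _ : {k : Fin d → ℤ // inCube d j m k}, ENNReal.ofReal (T ^ p)) +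
            ∑' ℓ : ℕ, ∑' k : {k : Fin d → ℤ // inCube d j m k},
              (if T * 2 ^ ℓ < ‖lam k.1‖ then ENNReal.ofReal ((T * 2 ^ (ℓ+1)) ^ p) else 0) := by
            rw [ENNReal.tsum_comm]
        _ ≤ ENNReal.ofReal (W ^ p * (2:ℝ) ^ (a*(1-p/r))) +
            ∑' ℓ : ℕ, ENNReal.ofReal ((W ^ p * (2:ℝ) ^ (a*(1-p/r)) * (2:ℝ) ^ p) * x ^ ℓ) :=
            add_le_add hfirst (ENNReal.tsum_le_tsum h5)
        _ = ENNReal.ofReal (W ^ p * (2:ℝ) ^ (a*(1-p/r))) * C0 := by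
            rw [hsecond, hC0, mul_add, mul_one]
    -- localSum bound
    have hlsb : localSum d p j m lam
        ≤ ENNReal.ofReal (W * (2:ℝ) ^ (a*(1-p/r) * (1/p))) * C0 ^ (1/p) := by
      rw [localSum]
      calc (∑' k : {k : Fin d → ℤ // inCube d j m k}, ENNReal.ofReal ‖lam k.1‖ ^ p) ^ (1/p)
          ≤ (ENNReal.ofReal (W ^ p * (2:ℝ) ^ (a*(1-p/r))) * C0) ^ (1/p) :=
            ENNReal.rpow_le_rpow hS (by positivity)
        _ = (ENNReal.ofReal (W ^ p * (2:ℝ) ^ (a*(1-p/r)))) ^ (1/p) * C0 ^ (1/p) :=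
            ENNReal.mul_rpow_of_nonneg _ _ (by positivity)
        _ = ENNReal.ofReal ((W ^ p * (2:ℝ) ^ (a*(1-p/r))) ^ (1/p)) * C0 ^ (1/p) := by
            rw [ENNReal.ofReal_rpow_of_pos hBpos]
        _ = ENNReal.ofReal (W * (2:ℝ) ^ (a*(1-p/r) * (1/p))) * C0 ^ (1/p) := by
            rw [key_alg3 hW0.le hp.ne' _]
    -- assemble
    have h2e : ((2:ℝ≥0∞) ^ (-((j:ℝ) * d) / p) : ℝ≥0∞) = ENNReal.ofReal ((2:ℝ) ^ (-a/p)) := by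
      rw [← ENNReal.ofReal_ofNat 2, ENNReal.ofReal_rpow_of_pos two_pos]
    have hφr : φ j ≤ (2:ℝ) ^ (a/r) := by
      have := (hGr.2 0 j (Nat.zero_le j)).2
      rw [hφ1, one_mul] at this
      have he : ((j:ℝ) - (0:ℕ)) * d / r = a/r := by rw [ha]; push_cast; ring
      rwa [he] at this
    have h7 : φ j * (2:ℝ) ^ (-(a/r)) ≤ 1 := by
      have hmul := mul_le_mul_of_nonneg_right hφr
        (Real.rpow_nonneg two_pos.le (-(a/r)))
      rwa [← Real.rpow_add two_pos, add_neg_cancel, Real.rpow_zero] at hmul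
    have hexp : (2:ℝ) ^ (-a/p) * (2:ℝ) ^ (a*(1-p/r) * (1/p)) = (2:ℝ) ^ (-(a/r)) := by
      rw [← Real.rpow_add two_pos]
      congr 1
      field_simp
      ring
    have hreal : φ j * (2:ℝ) ^ (-a/p) * (W * (2:ℝ) ^ (a*(1-p/r) * (1/p))) ≤ W := by
      have heq : φ j * (2:ℝ) ^ (-a/p) * (W * (2:ℝ) ^ (a*(1-p/r) * (1/p)))
          = (φ j * (2:ℝ) ^ (-(a/r))) * W := by
        rw [← hexp]; ring
      rw [heq]
      exact mul_le_of_le_one_left hW0.le h7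
    calc ENNReal.ofReal (φ j) * (2:ℝ≥0∞) ^ (-((j:ℝ) * d) / p) * localSum d p j m lam
        ≤ ENNReal.ofReal (φ j) * ENNReal.ofReal ((2:ℝ) ^ (-a/p)) *
            (ENNReal.ofReal (W * (2:ℝ) ^ (a*(1-p/r) * (1/p))) * C0 ^ (1/p)) := by
          rw [h2e]
          exact mul_le_mul_right hlsb _
      _ = ENNReal.ofReal (φ j * (2:ℝ) ^ (-a/p) * (W * (2:ℝ) ^ (a*(1-p/r) * (1/p)))) *
            C0 ^ (1/p) := by
          rw [ENNReal.ofReal_mul (mul_nonneg (hGp.1 j).le (by positivity)),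
            ENNReal.ofReal_mul (hGp.1 j).le, ← mul_assoc]
      _ ≤ ENNReal.ofReal W * C0 ^ (1/p) := mul_le_mul_left (ENNReal.ofReal_le_ofReal hreal) _
      _ = C0 ^ (1/p) * ENNReal.ofReal W := mul_comm _ _

end
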